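/- Fix t > 0 and r ∈ (0,1), and for the weighted random recursive tree with root weight t let A_n(r) := E[Σ_{u ∈ T'_n} r^{d(u)}] and B_n(r) := E[Σ_{u,w ∈ T'_n} r^{d(u,w)}] (the latter sum over all ordered pairs, including u = w). With the convention A_{−1}(r) := 0 and B_{−1}(r) := 0, for every n ≥ 0 the recursion B_n(r) = (1 + 2r/(n+t)) B_{n−1}(r) + (2rt/(n+t)) A_{n−1}(r) + 1 holds. -/

import Mathlib

open MeasureTheory ProbabilityTheory Filter Topology

instance : MeasurableSpace (Option ℕ) := ⊤

/-- Depth (graph distance to the root `o`) of the vertex `w n` in the recursive tree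
whose parent map is `P` : `P n = none` means the parent of `w n` is the root `o`, and
`P n = some j` (with `j < n`) means the parent of `w n` is `w j`. -/
def wrrtDepth (P : ℕ → Option ℕ) : ℕ → ℕ
  | n =>
    match P n with
    | none => 1
    | some j => if h : j < n then wrrtDepth P j + 1 else 1
termination_by n => n

/-- The parent of a vertex (`none` is the root `o`, `some n` is the vertex `w n`). -/
def wrrtParent (P : ℕ → Option ℕ) : Option ℕ → Option ℕ
  | none => none
  | some n =>
    match P n with
    | none => none
    | some j => if j < n then some j else none

/-- Depth of a vertex of the recursive tree (`none` is the root `o`). -/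
def wrrtDepthV (P : ℕ → Option ℕ) : Option ℕ → ℕ
  | none => 0
  | some n => wrrtDepth P n

def wrrtDistAux (P : ℕ → Option ℕ) : ℕ → Option ℕ → Option ℕ → ℕ
  | 0, _, _ => 0
  | fuel + 1, u, w =>
    if u = w then 0
    else if wrrtDepthV P u < wrrtDepthV P w then wrrtDistAux P fuel u (wrrtParent P w) + 1
    else wrrtDistAux P fuel (wrrtParent P u) w + 1

/-- Graph distance `d(u,w)` between two vertices of the recursive tree with parent
map `P`: repeatedly move the deeper vertex to its parent until the two meet. -/
def wrrtDist (P : ℕ → Option ℕ) (u w : Option ℕ) : ℕ :=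
  wrrtDistAux P (wrrtDepthV P u + wrrtDepthV P w) u w

/-- `A_n(r) = E [ ∑_{u ∈ T'_n} r^{d(u)} ]`, the sum over the non-root vertices
`w_0, …, w_n` of the random recursive tree with (random) parent maps `p · ω`. -/
noncomputable def wrrtA {Ω : Type*} [MeasurableSpace Ω] (μ : Measure Ω) (r : ℝ)
    (p : ℕ → Ω → Option ℕ) (n : ℕ) : ℝ :=
  ∫ ω, (∑ u ∈ Finset.range (n + 1), r ^ wrrtDepth (fun k => p k ω) u) ∂μ

/-- `B_n(r) = E [ ∑_{u,w ∈ T'_n} r^{d(u,w)} ]`, the sum over all ordered pairs of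
non-root vertices of the random recursive tree with (random) parent maps `p · ω`. -/
noncomputable def wrrtB {Ω : Type*} [MeasurableSpace Ω] (μ : Measure Ω) (r : ℝ)
    (p : ℕ → Ω → Option ℕ) (n : ℕ) : ℝ :=
  ∫ ω, (∑ u ∈ Finset.range (n + 1), ∑ w ∈ Finset.range (n + 1),
      r ^ wrrtDist (fun k => p k ω) (some u) (some w)) ∂μ

instance : MeasurableSingletonClass (Option ℕ) := ⟨fun _ => trivial⟩

lemma wrrtDepth_eq (P : ℕ → Option ℕ) (n : ℕ) :
    wrrtDepth P n = match P n with
      | none => 1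
      | some j => if j < n then wrrtDepth P j + 1 else 1 := by
  rw [wrrtDepth]
  cases P n with
  | none => rfl
  | some j => by_cases h : j < n <;> simp [h]

lemma wrrtDepth_pos (P : ℕ → Option ℕ) (n : ℕ) : 1 ≤ wrrtDepth P n := by
  rw [wrrtDepth_eq]
  cases P n with
  | none => exact le_refl 1
  | some j => by_cases h : j < n <;> simp [h] <;> omega

lemma wrrtDepthV_some (P : ℕ → Option ℕ) (k : ℕ) : wrrtDepthV P (some k) = wrrtDepth P k := rfl

lemma wrrtDepthV_none (P : ℕ → Option ℕ) : wrrtDepthV P none = 0 := rfl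

lemma depthV_parent (P : ℕ → Option ℕ) (k : ℕ) :
    wrrtDepthV P (wrrtParent P (some k)) + 1 = wrrtDepth P k := by
  rw [wrrtDepth_eq]
  simp only [wrrtParent]
  cases P k with
  | none => rfl
  | some j => by_cases h : j < k <;> simp [h, wrrtDepthV_some, wrrtDepthV_none]

lemma depthV_eq_zero (P : ℕ → Option ℕ) {u : Option ℕ} (h : wrrtDepthV P u = 0) : u = none := by
  cases u with
  | none => rfl
  | some k => have := wrrtDepth_pos P k; rw [wrrtDepthV_some] at h; omega

lemma wrrtDist_self (P : ℕ → Option ℕ) (u : Option ℕ) : wrrtDist P u u = 0 := by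
  unfold wrrtDist
  cases h : wrrtDepthV P u + wrrtDepthV P u with
  | zero => rfl
  | succ f => simp [wrrtDistAux]

lemma wrrtDist_right (P : ℕ → Option ℕ) (u w : Option ℕ) (hne : u ≠ w)
    (hlt : wrrtDepthV P u < wrrtDepthV P w) :
    wrrtDist P u w = wrrtDist P u (wrrtParent P w) + 1 := by
  obtain ⟨k, rfl⟩ : ∃ k, w = some k := by
    cases w with
    | none => simp [wrrtDepthV_none] at hlt
    | some k => exact ⟨k, rfl⟩
  have h1 := depthV_parent P k
  unfold wrrtDist
  have h2 : wrrtDepthV P u + wrrtDepthV P (some k)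
      = (wrrtDepthV P u + wrrtDepthV P (wrrtParent P (some k))) + 1 := by
    simp only [wrrtDepthV_some]; omega
  rw [h2]
  simp only [wrrtDistAux, if_neg hne, if_pos hlt]

lemma wrrtDist_left (P : ℕ → Option ℕ) (u w : Option ℕ) (hne : u ≠ w)
    (hge : ¬ wrrtDepthV P u < wrrtDepthV P w) :
    wrrtDist P u w = wrrtDist P (wrrtParent P u) w + 1 := by
  obtain ⟨k, rfl⟩ : ∃ k, u = some k := by
    cases u with
    | none =>
      exfalso
      have hw : wrrtDepthV P w = 0 := by
        rw [wrrtDepthV_none] at hge; omega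
      exact hne (by rw [depthV_eq_zero P hw])
    | some k => exact ⟨k, rfl⟩
  have h1 := depthV_parent P k
  unfold wrrtDist
  have h2 : wrrtDepthV P (some k) + wrrtDepthV P w
      = (wrrtDepthV P (wrrtParent P (some k)) + wrrtDepthV P w) + 1 := by
    simp only [wrrtDepthV_some]; omega
  rw [h2]
  simp only [wrrtDistAux, if_neg hne, if_neg hge]

lemma wrrtDist_none (P : ℕ → Option ℕ) (u : Option ℕ) :
    wrrtDist P u none = wrrtDepthV P u := by
  suffices H : ∀ n u, wrrtDepthV P u ≤ n → wrrtDist P u none = wrrtDepthV P u from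
    H _ u le_rfl
  intro n
  induction n with
  | zero =>
    intro u h
    rw [depthV_eq_zero P (Nat.le_zero.mp h)]
    exact wrrtDist_self P none
  | succ n ih =>
    intro u h
    by_cases hu : u = none
    · rw [hu]; exact wrrtDist_self P none
    · obtain ⟨k, rfl⟩ := Option.ne_none_iff_exists'.mp hu
      have h1 := depthV_parent P k
      simp only [wrrtDepthV_some] at h ⊢
      have hge : ¬ wrrtDepthV P (some k) < wrrtDepthV P none := by
        simp only [wrrtDepthV_none]; omega
      rw [wrrtDist_left P (some k) none hu hge, ih _ (by omega)]
      omega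

lemma wrrtDist_symm (P : ℕ → Option ℕ) (u w : Option ℕ) :
    wrrtDist P u w = wrrtDist P w u := by
  suffices H : ∀ n u w, wrrtDepthV P u + wrrtDepthV P w ≤ n →
      wrrtDist P u w = wrrtDist P w u from H _ u w le_rfl
  intro n
  induction n with
  | zero =>
    intro u w h
    rw [depthV_eq_zero P (u := u) (by omega), depthV_eq_zero P (u := w) (by omega)]
  | succ n ih =>
    intro u w h
    by_cases huw : u = w
    · rw [huw]
    rcases lt_trichotomy (wrrtDepthV P u) (wrrtDepthV P w) with hlt | heq | hgt
    · rw [wrrtDist_right P u w huw hlt, wrrtDist_left P w u (Ne.symm huw) (by omega)]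
      congr 1
      obtain ⟨k, rfl⟩ : ∃ k, w = some k := by
        cases w with
        | none => simp [wrrtDepthV_none] at hlt
        | some k => exact ⟨k, rfl⟩
      have h1 := depthV_parent P k
      simp only [wrrtDepthV_some] at h
      exact ih u (wrrtParent P (some k)) (by omega)
    · -- equal depths, u ≠ w : both are `some`
      have hu0 : wrrtDepthV P u ≠ 0 := by
        intro h0
        exact huw ((depthV_eq_zero P h0).trans (depthV_eq_zero P (by omega)).symm)
      obtain ⟨a, rfl⟩ : ∃ a, u = some a := by
        cases u with
        | none => exact absurd rfl hu0
        | some a => exact ⟨a, rfl⟩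
      obtain ⟨b, rfl⟩ : ∃ b, w = some b := by
        cases w with
        | none => rw [wrrtDepthV_none] at heq; exact absurd heq hu0
        | some b => exact ⟨b, rfl⟩
      have hpa := depthV_parent P a
      have hpb := depthV_parent P b
      simp only [wrrtDepthV_some] at h heq hu0
      have e1 := wrrtDist_left P (some a) (some b) huw
        (by simp only [wrrtDepthV_some]; omega)
      have e2 := wrrtDist_left P (some b) (some a) (Ne.symm huw)
        (by simp only [wrrtDepthV_some]; omega)
      have hne1 : wrrtParent P (some a) ≠ some b := by
        intro e
        rw [e, wrrtDepthV_some] at hpa; omega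
      have hne2 : wrrtParent P (some b) ≠ some a := by
        intro e
        rw [e, wrrtDepthV_some] at hpb; omega
      have e3 := wrrtDist_right P (wrrtParent P (some a)) (some b) hne1
        (by simp only [wrrtDepthV_some]; omega)
      have e4 := wrrtDist_right P (wrrtParent P (some b)) (some a) hne2
        (by simp only [wrrtDepthV_some]; omega)
      have e5 : wrrtDist P (wrrtParent P (some a)) (wrrtParent P (some b))
          = wrrtDist P (wrrtParent P (some b)) (wrrtParent P (some a)) :=
        ih _ _ (by omega)
      omega
    · rw [wrrtDist_left P u w huw (by omega), wrrtDist_right P w u (Ne.symm huw) hgt]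
      congr 1
      obtain ⟨a, rfl⟩ : ∃ a, u = some a := by
        cases u with
        | none => simp [wrrtDepthV_none] at hgt
        | some a => exact ⟨a, rfl⟩
      have h1 := depthV_parent P a
      simp only [wrrtDepthV_some] at h
      exact ih (wrrtParent P (some a)) w (by omega)

def wrrtBelowV (m : ℕ) (u : Option ℕ) : Prop := ∀ k, u = some k → k < m

lemma belowV_parent (P : ℕ → Option ℕ) (m : ℕ) (u : Option ℕ) (h : wrrtBelowV m u) :
    wrrtBelowV m (wrrtParent P u) := by
  intro k hk
  cases u with
  | none => simp [wrrtParent] at hk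
  | some a =>
    have hm := h a rfl
    simp only [wrrtParent] at hk
    revert hk
    cases P a with
    | none => simp
    | some j =>
      by_cases hj : j < a
      · simp only [if_pos hj, Option.some.injEq]
        intro hk
        omega
      · simp [hj]

lemma wrrtDist_step (P : ℕ → Option ℕ) (m : ℕ) (u : Option ℕ) (hb : wrrtBelowV m u) :
    wrrtDist P u (some m) = wrrtDist P u (wrrtParent P (some m)) + 1 := by
  suffices H : ∀ n u, wrrtDepthV P u ≤ n → wrrtBelowV m u →
      wrrtDist P u (some m) = wrrtDist P u (wrrtParent P (some m)) + 1 from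
    H _ u le_rfl hb
  intro n
  induction n with
  | zero =>
    intro u hd _
    have hu := depthV_eq_zero P (Nat.le_zero.mp hd)
    subst hu
    exact wrrtDist_right P none (some m) (by simp)
      (by rw [wrrtDepthV_none, wrrtDepthV_some]; have := wrrtDepth_pos P m; omega)
  | succ n ih =>
    intro u hd hb
    have hne : u ≠ some m := fun e => absurd (hb m e) (lt_irrefl m)
    by_cases hlt : wrrtDepthV P u < wrrtDepthV P (some m)
    · exact wrrtDist_right P u (some m) hne hlt
    · have hm1 : 1 ≤ wrrtDepth P m := wrrtDepth_pos P m
      obtain ⟨a, rfl⟩ : ∃ a, u = some a := by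
        cases u with
        | none => rw [wrrtDepthV_none, wrrtDepthV_some] at hlt; omega
        | some a => exact ⟨a, rfl⟩
      have hpu := depthV_parent P a
      have hpm := depthV_parent P m
      simp only [wrrtDepthV_some] at hlt hd
      have e1 := wrrtDist_left P (some a) (some m) hne
        (by simp only [wrrtDepthV_some]; omega)
      have e2 := ih (wrrtParent P (some a)) (by omega) (belowV_parent P m _ hb)
      have hne2 : some a ≠ wrrtParent P (some m) := by
        intro e
        rw [← e, wrrtDepthV_some] at hpm; omega
      have e3 := wrrtDist_left P (some a) (wrrtParent P (some m)) hne2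
        (by simp only [wrrtDepthV_some]; omega)
      omega

def wrrtLeV (N : ℕ) (u : Option ℕ) : Prop := ∀ k, u = some k → k ≤ N

lemma leV_none (N : ℕ) : wrrtLeV N none := fun k hk => by simp at hk

lemma leV_some {N k : ℕ} (h : k ≤ N) : wrrtLeV N (some k) := fun j hj => by
  cases hj; exact h

lemma leV_parent (P : ℕ → Option ℕ) (N : ℕ) (u : Option ℕ) (h : wrrtLeV N u) :
    wrrtLeV N (wrrtParent P u) := by
  intro k hk
  cases u with
  | none => simp [wrrtParent] at hk
  | some a =>
    have ha := h a rfl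
    simp only [wrrtParent] at hk
    revert hk
    cases P a with
    | none => simp
    | some j =>
      by_cases hj : j < a
      · simp only [if_pos hj, Option.some.injEq]
        intro hk; omega
      · simp [hj]

section congr

variable {P Q : ℕ → Option ℕ} {N : ℕ} (h : ∀ k ≤ N, P k = Q k)
include h

lemma wrrtDepth_congr : ∀ k ≤ N, wrrtDepth P k = wrrtDepth Q k := by
  intro k
  induction k using Nat.strong_induction_on with
  | _ k ih =>
    intro hk
    rw [wrrtDepth_eq P, wrrtDepth_eq Q, ← h k hk]
    cases P k with
    | none => rfl
    | some j =>
      by_cases hj : j < k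
      · simp only [if_pos hj, ih j hj (le_trans (le_of_lt hj) hk)]
      · simp [hj]

lemma wrrtDepthV_congr {u : Option ℕ} (hu : wrrtLeV N u) :
    wrrtDepthV P u = wrrtDepthV Q u := by
  cases u with
  | none => rfl
  | some k => exact wrrtDepth_congr h k (hu k rfl)

lemma wrrtParent_congr {u : Option ℕ} (hu : wrrtLeV N u) :
    wrrtParent P u = wrrtParent Q u := by
  cases u with
  | none => rfl
  | some a => simp only [wrrtParent, h a (hu a rfl)]

lemma wrrtDistAux_congr : ∀ f (u w : Option ℕ), wrrtLeV N u → wrrtLeV N w →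
    wrrtDistAux P f u w = wrrtDistAux Q f u w := by
  intro f
  induction f with
  | zero => intro u w _ _; rfl
  | succ f ih =>
    intro u w hu hw
    by_cases he : u = w
    · simp [wrrtDistAux, he]
    have du := wrrtDepthV_congr h hu
    have dw := wrrtDepthV_congr h hw
    have pu := wrrtParent_congr h hu
    have pw := wrrtParent_congr h hw
    simp only [wrrtDistAux, if_neg he, du, dw]
    by_cases hlt : wrrtDepthV Q u < wrrtDepthV Q w
    · simp only [if_pos hlt, pw]
      exact congrArg (· + 1) (ih u (wrrtParent Q w) hu (leV_parent Q N w hw))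
    · simp only [if_neg hlt, pu]
      exact congrArg (· + 1) (ih (wrrtParent Q u) w (leV_parent Q N u hu) hw)

lemma wrrtDist_congr {u w : Option ℕ} (hu : wrrtLeV N u) (hw : wrrtLeV N w) :
    wrrtDist P u w = wrrtDist Q u w := by
  unfold wrrtDist
  rw [wrrtDepthV_congr h hu, wrrtDepthV_congr h hw]
  exact wrrtDistAux_congr h _ u w hu hw

end congr

section meas

variable {Ω : Type*} [MeasurableSpace Ω] {p : ℕ → Ω → Option ℕ}

lemma measurable_wrrtDist (hp : ∀ n, Measurable (p n)) {N : ℕ} {u w : Option ℕ}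
    (hu : wrrtLeV N u) (hw : wrrtLeV N w) :
    Measurable (fun ω => wrrtDist (fun k => p k ω) u w) := by
  have key : (fun ω => wrrtDist (fun k => p k ω) u w)
      = (fun v : Fin (N + 1) → Option ℕ =>
          wrrtDist (fun k => if h : k < N + 1 then v ⟨k, h⟩ else none) u w)
        ∘ (fun ω i => p i ω) := by
    funext ω
    exact wrrtDist_congr (fun k hk => by simp [Nat.lt_succ_of_le hk]) hu hw
  rw [key]
  exact (measurable_of_countable _).comp (measurable_pi_lambda _ fun i => hp i)

lemma measurable_pow_wrrtDist (hp : ∀ n, Measurable (p n)) (r : ℝ) {N : ℕ}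
    {u w : Option ℕ} (hu : wrrtLeV N u) (hw : wrrtLeV N w) :
    Measurable (fun ω => r ^ wrrtDist (fun k => p k ω) u w) :=
  measurable_from_top.comp (measurable_wrrtDist hp hu hw)

lemma integrable_pow_wrrtDist {μ : MeasureTheory.Measure Ω}
    [MeasureTheory.IsProbabilityMeasure μ]
    (hp : ∀ n, Measurable (p n)) {r : ℝ} (hr0 : 0 < r) (hr1 : r ≤ 1) {N : ℕ}
    {u w : Option ℕ} (hu : wrrtLeV N u) (hw : wrrtLeV N w) :
    MeasureTheory.Integrable (fun ω => r ^ wrrtDist (fun k => p k ω) u w) μ := by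
  refine (MeasureTheory.integrable_const (1 : ℝ)).mono'
    (measurable_pow_wrrtDist hp r hu hw).aestronglyMeasurable
    (Filter.Eventually.of_forall fun ω => ?_)
  rw [Real.norm_eq_abs, abs_of_nonneg (by positivity)]
  exact pow_le_one₀ hr0.le hr1

end meas

def wrrtPhi (n : ℕ) : Option ℕ → Option ℕ
  | none => none
  | some j => if j < n + 1 then some j else none

lemma wrrtParent_eq_phi (P : ℕ → Option ℕ) (n : ℕ) :
    wrrtParent P (some (n + 1)) = wrrtPhi n (P (n + 1)) := by
  simp only [wrrtParent]
  cases P (n + 1) with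
  | none => rfl
  | some j => rfl

lemma wrrtPhi_mem (n : ℕ) (x : Option ℕ) :
    wrrtPhi n x ∈ insert none ((Finset.range (n + 1)).image some) := by
  cases x with
  | none => exact Finset.mem_insert_self _ _
  | some j =>
    by_cases hj : j < n + 1
    · simp only [wrrtPhi, if_pos hj]
      exact Finset.mem_insert_of_mem (Finset.mem_image_of_mem some (Finset.mem_range.mpr hj))
    · simp only [wrrtPhi, if_neg hj]
      exact Finset.mem_insert_self _ _

lemma measurableSet_option (s : Set (Option ℕ)) : MeasurableSet s :=
  MeasurableSpace.measurableSet_top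

/-- The recursion for `B_n(r)`: with the conventions `A_{-1} = B_{-1} = 0`,
`B_n(r) = (1 + 2r/(n+t)) B_{n-1}(r) + (2rt/(n+t)) A_{n-1}(r) + 1` for all `n ≥ 0`
(the case `n = 0` reads `B_0(r) = 1`). -/
theorem wrrt_B_recursion
    {Ω : Type*} [MeasurableSpace Ω] (μ : Measure Ω) [IsProbabilityMeasure μ]
    (t r : ℝ) (ht : 0 < t) (hr : r ∈ Set.Ioo (0 : ℝ) 1)
    -- `p n` is the (random) parent of the vertex `w n` of the weighted random
    -- recursive tree with root weight `t`:
    (p : ℕ → Ω → Option ℕ) (hpmeas : ∀ n, Measurable (p n))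
    (hroot : ∀ n : ℕ, μ {ω | p n ω = none} = ENNReal.ofReal (t / (n + t)))
    (hparent : ∀ n : ℕ, ∀ j < n, μ {ω | p n ω = some j} = ENNReal.ofReal (1 / (n + t)))
    (hindep : iIndepFun p μ)
    :
    wrrtB μ r p 0 = 1 ∧
    ∀ n : ℕ, wrrtB μ r p (n + 1) =
      (1 + 2 * r / ((n : ℝ) + 1 + t)) * wrrtB μ r p n +
        (2 * r * t / ((n : ℝ) + 1 + t)) * wrrtA μ r p n + 1 := by
  obtain ⟨hr0, hr1⟩ := hr
  constructor
  · unfold wrrtB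
    simp [Finset.sum_range_one, wrrtDist_self]
  intro n
  have hτ : (0:ℝ) < (n:ℝ) + 1 + t := by positivity
  -- basic integrability
  have hintuw : ∀ (u w : Option ℕ), wrrtLeV (n+1) u → wrrtLeV (n+1) w →
      Integrable (fun ω => r ^ wrrtDist (fun k => p k ω) u w) μ :=
    fun u w hu hw => integrable_pow_wrrtDist hpmeas hr0 hr1.le hu hw
  have hSBint : Integrable (fun ω => ∑ u ∈ Finset.range (n+1), ∑ w ∈ Finset.range (n+1),
      r ^ wrrtDist (fun k => p k ω) (some u) (some w)) μ :=
    integrable_finset_sum _ fun u hu => integrable_finset_sum _ fun w hw =>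
      hintuw _ _ (leV_some (by have := Finset.mem_range.mp hu; omega))
        (leV_some (by have := Finset.mem_range.mp hw; omega))
  have hDint : ∀ v : Option ℕ, wrrtLeV (n+1) v →
      Integrable (fun ω => ∑ u ∈ Finset.range (n+1),
        r ^ wrrtDist (fun k => p k ω) (some u) v) μ :=
    fun v hv => integrable_finset_sum _ fun u hu =>
      hintuw _ _ (leV_some (by have := Finset.mem_range.mp hu; omega)) hv
  have hCint : Integrable (fun ω => ∑ u ∈ Finset.range (n+1),
      r ^ wrrtDist (fun k => p k ω) (some u) (some (n+1))) μ :=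
    hDint (some (n+1)) (leV_some le_rfl)
  -- pointwise decomposition of the B_{n+1} integrand
  have hpoint : ∀ ω, (∑ u ∈ Finset.range (n+1+1), ∑ w ∈ Finset.range (n+1+1),
        r ^ wrrtDist (fun k => p k ω) (some u) (some w))
      = (∑ u ∈ Finset.range (n+1), ∑ w ∈ Finset.range (n+1),
          r ^ wrrtDist (fun k => p k ω) (some u) (some w))
        + 2 * (∑ u ∈ Finset.range (n+1),
            r ^ wrrtDist (fun k => p k ω) (some u) (some (n+1))) + 1 := by
    intro ω
    rw [Finset.sum_range_succ]
    have hin : ∀ u : ℕ, (∑ w ∈ Finset.range (n+1+1),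
          r ^ wrrtDist (fun k => p k ω) (some u) (some w))
        = (∑ w ∈ Finset.range (n+1), r ^ wrrtDist (fun k => p k ω) (some u) (some w))
          + r ^ wrrtDist (fun k => p k ω) (some u) (some (n+1)) :=
      fun u => Finset.sum_range_succ _ _
    simp only [hin]
    rw [Finset.sum_add_distrib, wrrtDist_self, pow_zero]
    have hsym : (∑ w ∈ Finset.range (n+1),
          r ^ wrrtDist (fun k => p k ω) (some (n+1)) (some w))
        = ∑ w ∈ Finset.range (n+1), r ^ wrrtDist (fun k => p k ω) (some w) (some (n+1)) :=
      Finset.sum_congr rfl fun w _ => by rw [wrrtDist_symm]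
    rw [hsym]
    ring
  -- split the integral
  have i1 : Integrable (fun ω => 2 * ∑ u ∈ Finset.range (n+1),
      r ^ wrrtDist (fun k => p k ω) (some u) (some (n+1))) μ := hCint.const_mul 2
  have i2 : Integrable (fun ω => (∑ u ∈ Finset.range (n+1), ∑ w ∈ Finset.range (n+1),
      r ^ wrrtDist (fun k => p k ω) (some u) (some w))
      + 2 * ∑ u ∈ Finset.range (n+1),
        r ^ wrrtDist (fun k => p k ω) (some u) (some (n+1))) μ := hSBint.add i1
  have hB1 : wrrtB μ r p (n+1) = wrrtB μ r p n
      + 2 * (∫ ω, (∑ u ∈ Finset.range (n+1),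
          r ^ wrrtDist (fun k => p k ω) (some u) (some (n+1))) ∂μ) + 1 := by
    unfold wrrtB
    rw [show (fun ω => ∑ u ∈ Finset.range (n+1+1), ∑ w ∈ Finset.range (n+1+1),
        r ^ wrrtDist (fun k => p k ω) (some u) (some w))
      = (fun ω => (∑ u ∈ Finset.range (n+1), ∑ w ∈ Finset.range (n+1),
          r ^ wrrtDist (fun k => p k ω) (some u) (some w))
        + 2 * (∑ u ∈ Finset.range (n+1),
            r ^ wrrtDist (fun k => p k ω) (some u) (some (n+1))) + 1) from funext hpoint]
    rw [integral_add i2 (integrable_const 1), integral_add hSBint i1, integral_const_mul,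
      integral_const]
    simp
  -- rewrite the cross term using the tree recursion and a sum over possible parents
  have hCstep : ∀ ω, (∑ u ∈ Finset.range (n+1),
        r ^ wrrtDist (fun k => p k ω) (some u) (some (n+1)))
      = r * ∑ v ∈ insert none ((Finset.range (n+1)).image some),
          (if wrrtPhi n (p (n+1) ω) = v then (1:ℝ) else 0)
            * ∑ u ∈ Finset.range (n+1), r ^ wrrtDist (fun k => p k ω) (some u) v := by
    intro ω
    have h1 : ∀ u ∈ Finset.range (n+1), r ^ wrrtDist (fun k => p k ω) (some u) (some (n+1))
        = r * r ^ wrrtDist (fun k => p k ω) (some u) (wrrtPhi n (p (n+1) ω)) := by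
      intro u hu
      rw [← wrrtParent_eq_phi (fun k => p k ω) n,
        wrrtDist_step (fun k => p k ω) (n+1) (some u)
          (fun k hk => by obtain rfl := Option.some.inj hk; exact Finset.mem_range.mp hu),
        pow_succ]
      ring
    rw [Finset.sum_congr rfl h1, ← Finset.mul_sum]
    congr 1
    have h2 : ∀ g : Option ℕ → ℝ, (∑ v ∈ insert none ((Finset.range (n+1)).image some),
        (if wrrtPhi n (p (n+1) ω) = v then (1:ℝ) else 0) * g v)
        = g (wrrtPhi n (p (n+1) ω)) := by
      intro g
      rw [Finset.sum_congr rfl (fun v _ => by rw [ite_mul, one_mul, zero_mul]),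
        Finset.sum_ite_eq, if_pos (wrrtPhi_mem n _)]
    exact (h2 fun v => ∑ u ∈ Finset.range (n+1),
      r ^ wrrtDist (fun k => p k ω) (some u) v).symm
  -- sets and measure computations
  have hmeasset : ∀ v : Option ℕ, MeasurableSet {ω | wrrtPhi n (p (n+1) ω) = v} :=
    fun v => hpmeas (n+1) (measurableSet_option {x | wrrtPhi n x = v})
  have hμsome : ∀ j ∈ Finset.range (n+1),
      μ {ω | wrrtPhi n (p (n+1) ω) = some j} = ENNReal.ofReal (1 / ((n:ℝ) + 1 + t)) := by
    intro j hj
    have hj' : j < n + 1 := Finset.mem_range.mp hj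
    have hset : {ω | wrrtPhi n (p (n+1) ω) = some j} = {ω | p (n+1) ω = some j} := by
      ext ω
      simp only [Set.mem_setOf_eq]
      constructor
      · intro h
        cases hx : p (n+1) ω with
        | none => rw [hx] at h; simp [wrrtPhi] at h
        | some a =>
          rw [hx] at h
          simp only [wrrtPhi] at h
          by_cases ha : a < n + 1
          · rw [if_pos ha] at h; exact h
          · rw [if_neg ha] at h; exact absurd h (by simp)
      · intro h
        rw [h]
        simp [wrrtPhi, hj']
    rw [hset, hparent (n+1) j hj']
    congr 1
    push_cast
    ring
  have hμnone : μ {ω | wrrtPhi n (p (n+1) ω) = none}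
      = ENNReal.ofReal (t / ((n:ℝ) + 1 + t)) := by
    have hEc : {ω | wrrtPhi n (p (n+1) ω) = none}ᶜ
        = ⋃ j ∈ Finset.range (n+1), {ω | p (n+1) ω = some j} := by
      ext ω
      simp only [Set.mem_compl_iff, Set.mem_setOf_eq, Set.mem_iUnion, Finset.mem_range,
        exists_prop]
      constructor
      · intro h
        cases hx : p (n+1) ω with
        | none => rw [hx] at h; exact absurd rfl h
        | some j =>
          by_cases hj : j < n + 1
          · exact ⟨j, hj, rfl⟩
          · rw [hx] at h; exact absurd (by simp [wrrtPhi, hj]) h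
      · rintro ⟨j, hj, hx⟩ hcon
        rw [hx] at hcon
        simp [wrrtPhi, hj] at hcon
    have hmeasj : ∀ j ∈ Finset.range (n+1), MeasurableSet {ω | p (n+1) ω = some j} :=
      fun j _ => hpmeas (n+1) (measurableSet_option {x | x = some j})
    have hpd : Set.PairwiseDisjoint (↑(Finset.range (n+1)) : Set ℕ)
        (fun j => {ω | p (n+1) ω = some j}) := by
      intro a _ b _ hab
      exact Set.disjoint_left.mpr fun ω ha hb => hab (Option.some.inj (ha.symm.trans hb))
    have hEcval : μ ({ω | wrrtPhi n (p (n+1) ω) = none}ᶜ)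
        = ENNReal.ofReal (((n:ℝ)+1) / ((n:ℝ)+1+t)) := by
      rw [hEc, measure_biUnion_finset hpd hmeasj]
      rw [Finset.sum_congr rfl (fun j hj => by
        rw [hparent (n+1) j (Finset.mem_range.mp hj)]
        try (congr 1; push_cast; ring))]
      rw [Finset.sum_const, Finset.card_range, nsmul_eq_mul,
        ← ENNReal.ofReal_natCast (n+1), ← ENNReal.ofReal_mul (by positivity)]
      congr 1
      push_cast
      ring
    have hco : ENNReal.ofReal (t/((n:ℝ)+1+t)) + ENNReal.ofReal (((n:ℝ)+1)/((n:ℝ)+1+t))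
        = 1 := by
      rw [← ENNReal.ofReal_add (by positivity) (by positivity), ← ENNReal.ofReal_one]
      congr 1
      field_simp
      ring
    have hsum := measure_add_measure_compl (μ := μ) (hmeasset none)
    rw [hEcval, measure_univ] at hsum
    exact WithTop.add_right_cancel ENNReal.ofReal_ne_top (hsum.trans hco.symm)
  -- the key independence computation, for each possible parent v
  have hterm : ∀ v ∈ insert none ((Finset.range (n+1)).image some),
      (∫ ω, (if wrrtPhi n (p (n+1) ω) = v then (1:ℝ) else 0)
          * ∑ u ∈ Finset.range (n+1), r ^ wrrtDist (fun k => p k ω) (some u) v ∂μ)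
        = (μ {ω | wrrtPhi n (p (n+1) ω) = v}).toReal
          * ∫ ω, (∑ u ∈ Finset.range (n+1),
              r ^ wrrtDist (fun k => p k ω) (some u) v) ∂μ := by
    intro v hv
    have hvLe : wrrtLeV n v := by
      rcases Finset.mem_insert.mp hv with h | h
      · subst h; exact leV_none n
      · obtain ⟨j, hj, rfl⟩ := Finset.mem_image.mp h
        exact leV_some (by have := Finset.mem_range.mp hj; omega)
    have hvLe' : wrrtLeV (n+1) v := fun k hk => le_trans (hvLe k hk) (Nat.le_succ n)
    have base : IndepFun (fun a (i : ({n+1} : Finset ℕ)) => p i a)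
        (fun a (i : (Finset.range (n+1) : Finset ℕ)) => p i a) μ :=
      hindep.indepFun_finset {n+1} (Finset.range (n+1))
        (by simp [Finset.disjoint_left]) hpmeas
    have hG : Measurable (fun vf : ({n+1} : Finset ℕ) → Option ℕ =>
        if wrrtPhi n (vf ⟨n+1, Finset.mem_singleton_self _⟩) = v then (1:ℝ) else 0) :=
      measurable_of_countable _
    have hF : Measurable (fun vf : (Finset.range (n+1) : Finset ℕ) → Option ℕ =>
        ∑ u ∈ Finset.range (n+1), r ^ wrrtDist
          (fun k => if h : k ∈ Finset.range (n+1) then vf ⟨k, h⟩ else none) (some u) v) :=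
      measurable_of_countable _
    have hcompF : (fun ω => ∑ u ∈ Finset.range (n+1),
          r ^ wrrtDist (fun k => p k ω) (some u) v)
        = (fun vf : (Finset.range (n+1) : Finset ℕ) → Option ℕ =>
            ∑ u ∈ Finset.range (n+1), r ^ wrrtDist
              (fun k => if h : k ∈ Finset.range (n+1) then vf ⟨k, h⟩ else none) (some u) v)
          ∘ (fun a (i : (Finset.range (n+1) : Finset ℕ)) => p i a) := by
      funext ω
      refine Finset.sum_congr rfl fun u hu => ?_
      congr 1
      exact wrrtDist_congr (N := n)
        (fun k hk => by rw [dif_pos (Finset.mem_range.mpr (Nat.lt_succ_of_le hk))])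
        (leV_some (Nat.lt_succ_iff.mp (Finset.mem_range.mp hu))) hvLe
    have hind : IndepFun
        (fun ω => if wrrtPhi n (p (n+1) ω) = v then (1:ℝ) else 0)
        (fun ω => ∑ u ∈ Finset.range (n+1),
          r ^ wrrtDist (fun k => p k ω) (some u) v) μ := by
      rw [hcompF]
      exact base.comp hG hF
    have hmG : AEStronglyMeasurable
        (fun ω => if wrrtPhi n (p (n+1) ω) = v then (1:ℝ) else 0) μ :=
      (Measurable.ite (hmeasset v) measurable_const measurable_const).aestronglyMeasurable
    have hmF : AEStronglyMeasurable (fun ω => ∑ u ∈ Finset.range (n+1),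
        r ^ wrrtDist (fun k => p k ω) (some u) v) μ := (hDint v hvLe').aestronglyMeasurable
    have heq : (∫ ω, (if wrrtPhi n (p (n+1) ω) = v then (1:ℝ) else 0)
          * ∑ u ∈ Finset.range (n+1), r ^ wrrtDist (fun k => p k ω) (some u) v ∂μ)
        = (∫ ω, (if wrrtPhi n (p (n+1) ω) = v then (1:ℝ) else 0) ∂μ)
          * ∫ ω, (∑ u ∈ Finset.range (n+1),
              r ^ wrrtDist (fun k => p k ω) (some u) v) ∂μ :=
      hind.integral_mul_eq_mul_integral hmG hmF
    rw [heq]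
    congr 1
    rw [show (fun ω => if wrrtPhi n (p (n+1) ω) = v then (1:ℝ) else 0)
        = Set.indicator {ω | wrrtPhi n (p (n+1) ω) = v} (fun _ => (1:ℝ)) from funext fun ω => by
      by_cases h : wrrtPhi n (p (n+1) ω) = v <;>
        simp [Set.indicator_apply, Set.mem_setOf_eq, h]]
    rw [integral_indicator_const (1:ℝ) (hmeasset v), smul_eq_mul, mul_one, measureReal_def]
  -- integrability of each indicator * sum term
  have htermint : ∀ v ∈ insert none ((Finset.range (n+1)).image some),
      Integrable (fun ω => (if wrrtPhi n (p (n+1) ω) = v then (1:ℝ) else 0)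
        * ∑ u ∈ Finset.range (n+1), r ^ wrrtDist (fun k => p k ω) (some u) v) μ := by
    intro v hv
    have hvLe' : wrrtLeV (n+1) v := by
      rcases Finset.mem_insert.mp hv with h | h
      · subst h; exact leV_none _
      · obtain ⟨j, hj, rfl⟩ := Finset.mem_image.mp h
        exact leV_some (by have := Finset.mem_range.mp hj; omega)
    refine (hDint v hvLe').bdd_mul (c := 1)
      ((Measurable.ite (hmeasset v) measurable_const measurable_const).aestronglyMeasurable)
      (Filter.Eventually.of_forall fun ω => ?_)
    by_cases h : wrrtPhi n (p (n+1) ω) = v <;> simp [h]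
  -- D none integrates to A_n, the sum of D (some j) integrates to B_n
  have hDnone : (∫ ω, (∑ u ∈ Finset.range (n+1),
        r ^ wrrtDist (fun k => p k ω) (some u) none) ∂μ) = wrrtA μ r p n := by
    unfold wrrtA
    congr 1
    funext ω
    exact Finset.sum_congr rfl fun u _ => by rw [wrrtDist_none]; rfl
  have hDB : (∑ j ∈ Finset.range (n+1), ∫ ω, (∑ u ∈ Finset.range (n+1),
        r ^ wrrtDist (fun k => p k ω) (some u) (some j)) ∂μ) = wrrtB μ r p n := by
    rw [← integral_finset_sum _ (fun j hj => hDint (some j)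
      (leV_some (by have := Finset.mem_range.mp hj; omega)))]
    unfold wrrtB
    congr 1
    funext ω
    exact Finset.sum_comm
  -- put the cross term together
  have hICval : (∫ ω, (∑ u ∈ Finset.range (n+1),
        r ^ wrrtDist (fun k => p k ω) (some u) (some (n+1))) ∂μ)
      = r * ((t/((n:ℝ)+1+t)) * wrrtA μ r p n + (1/((n:ℝ)+1+t)) * wrrtB μ r p n) := by
    rw [show (fun ω => ∑ u ∈ Finset.range (n+1),
        r ^ wrrtDist (fun k => p k ω) (some u) (some (n+1)))
      = (fun ω => r * ∑ v ∈ insert none ((Finset.range (n+1)).image some),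
          (if wrrtPhi n (p (n+1) ω) = v then (1:ℝ) else 0)
            * ∑ u ∈ Finset.range (n+1), r ^ wrrtDist (fun k => p k ω) (some u) v)
        from funext hCstep]
    rw [integral_const_mul]
    congr 1
    rw [integral_finset_sum _ htermint, Finset.sum_congr rfl hterm]
    have hnotmem : (none : Option ℕ) ∉ (Finset.range (n+1)).image some := by simp
    rw [Finset.sum_insert hnotmem, Finset.sum_image (fun a _ b _ h => Option.some.inj h)]
    rw [hμnone, hDnone, ENNReal.toReal_ofReal (by positivity)]
    rw [Finset.sum_congr rfl (fun j hj => by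
      rw [hμsome j hj, ENNReal.toReal_ofReal (by positivity)])]
    rw [← Finset.mul_sum, hDB]
    try ring
  rw [hB1, hICval]
  ring
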